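/- Let λ_1 < ⋯ < λ_N be the eigenvalues of an N×N Jacobi matrix J with nonzero off-diagonals, and ψ_1,...,ψ_N orthonormal eigenvectors. For 1 ≤ n ≤ N-2 and β ∈ {λ_1,...,λ_N}: either ψ_{k}(n) ≠ 0 for the eigenvector ψ_k corresponding to β (in which case β is a pole of G(·,n,n) = Σ_l |ψ_l(n)|²/(λ_l - ·)), or ψ_k(n) = 0, in which case β is a common eigenvalue of J_{[0,n-1]} and J_{[n+1,N-1]} and G(β,n,n) = 0 (the limit of G at β exists and equals 0). -/

import Mathlib

open Matrix BigOperators Filter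

/-- The `N × N` Jacobi matrix with diagonal `a` and off-diagonals `b`. -/
def jacobi (N : ℕ) (a b : ℕ → ℝ) : Matrix (Fin N) (Fin N) ℝ :=
  Matrix.of fun i j =>
    if (i : ℕ) = (j : ℕ) then a i
    else if (i : ℕ) + 1 = (j : ℕ) then b i
    else if (j : ℕ) + 1 = (i : ℕ) then b j
    else 0

/-- `μ` is an eigenvalue of the real matrix `M`. -/
def isEig {m : ℕ} (M : Matrix (Fin m) (Fin m) ℝ) (μ : ℝ) : Prop :=
  ∃ v : Fin m → ℝ, v ≠ 0 ∧ M.mulVec v = μ • v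

lemma jacobi_mulVec (m : ℕ) (a b : ℕ → ℝ) (v : Fin m → ℝ) (i : Fin m) :
    (jacobi m a b).mulVec v i =
      (if h : 0 < (i : ℕ) then b ((i : ℕ) - 1) * v ⟨(i : ℕ) - 1, by omega⟩ else 0)
      + a i * v i
      + (if h : (i : ℕ) + 1 < m then b i * v ⟨(i : ℕ) + 1, h⟩ else 0) := by
  classical
  simp only [Matrix.mulVec, dotProduct, jacobi, Matrix.of_apply]
  have key : ∀ j : Fin m,
      (if (i : ℕ) = (j : ℕ) then a i
        else if (i : ℕ) + 1 = (j : ℕ) then b i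
        else if (j : ℕ) + 1 = (i : ℕ) then b j
        else 0) * v j
      = (if (i : ℕ) = (j : ℕ) then a i * v j else 0)
        + (if (i : ℕ) + 1 = (j : ℕ) then b i * v j else 0)
        + (if (j : ℕ) + 1 = (i : ℕ) then b j * v j else 0) := by
    intro j
    split_ifs <;> first | omega | ring
  rw [Finset.sum_congr rfl (fun j _ => key j), Finset.sum_add_distrib,
    Finset.sum_add_distrib]
  have h1 : (∑ j : Fin m, if (i : ℕ) = (j : ℕ) then a i * v j else 0) = a i * v i := by
    have e : ∀ j : Fin m, ((i:ℕ) = (j:ℕ)) = (i = j) := by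
      intro j; simp [Fin.ext_iff]
    simp only [e]
    rw [Finset.sum_ite_eq]
    simp
  have h2 : (∑ j : Fin m, if (i : ℕ) + 1 = (j : ℕ) then b i * v j else 0)
      = if h : (i : ℕ) + 1 < m then b i * v ⟨(i : ℕ) + 1, h⟩ else 0 := by
    by_cases h : (i : ℕ) + 1 < m
    · have e : ∀ j : Fin m, ((i:ℕ) + 1 = (j:ℕ)) = ((⟨(i:ℕ)+1, h⟩ : Fin m) = j) := by
        intro j; simp [Fin.ext_iff]
      simp only [e]
      rw [Finset.sum_ite_eq]
      simp [h]
    · rw [dif_neg h, Finset.sum_eq_zero]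
      intro j _
      rw [if_neg]
      omega
  have h3 : (∑ j : Fin m, if (j : ℕ) + 1 = (i : ℕ) then b j * v j else 0)
      = if h : 0 < (i : ℕ) then b ((i : ℕ) - 1) * v ⟨(i : ℕ) - 1, by omega⟩ else 0 := by
    by_cases h : 0 < (i : ℕ)
    · have e : ∀ j : Fin m, ((j:ℕ) + 1 = (i:ℕ)) = ((⟨(i:ℕ)-1, by omega⟩ : Fin m) = j) := by
        intro j
        simp only [Fin.ext_iff]
        simp only [eq_iff_iff]
        constructor <;> (intro hh; omega)
      simp only [e]
      rw [Finset.sum_ite_eq]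
      simp [h]
    · rw [dif_neg h, Finset.sum_eq_zero]
      intro j _
      rw [if_neg]
      omega
  rw [h1, h2, h3]
  ring

/-- The extension-by-zero of `v : Fin N → ℝ` to `ℕ`. -/
noncomputable def ext0 (N : ℕ) (v : Fin N → ℝ) : ℕ → ℝ :=
  fun i => if h : i < N then v ⟨i, h⟩ else 0

lemma ext0_apply (N : ℕ) (v : Fin N → ℝ) (i : ℕ) (h : i < N) :
    ext0 N v i = v ⟨i, h⟩ := dif_pos h

lemma ext0_rec (N : ℕ) (a b : ℕ → ℝ) (μ : ℝ) (v : Fin N → ℝ)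
    (hv : (jacobi N a b).mulVec v = μ • v) (i : ℕ) (hi : i < N) :
    (if 0 < i then b (i - 1) * ext0 N v (i - 1) else 0) + a i * ext0 N v i
      + b i * ext0 N v (i + 1) = μ * ext0 N v i := by
  have h := congrFun hv ⟨i, hi⟩
  rw [jacobi_mulVec] at h
  simp only [Pi.smul_apply, smul_eq_mul] at h
  have e0 : ext0 N v i = v ⟨i, hi⟩ := by simp [ext0, hi]
  rw [e0]
  rw [← h]
  congr 1
  · congr 1
    split_ifs with h1
    · have : i - 1 < N := by omega
      simp [ext0, this]
    · rfl
  · split_ifs with h1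
    · simp [ext0, h1]
    · simp [ext0, h1]

lemma vanish (N : ℕ) (a b : ℕ → ℝ) (hb : ∀ i, b i ≠ 0) (μ : ℝ)
    (v : Fin N → ℝ) (hv : (jacobi N a b).mulVec v = μ • v)
    (j : ℕ) (hj : j + 1 < N) (h0 : ext0 N v j = 0) (h1 : ext0 N v (j + 1) = 0) :
    v = 0 := by
  have hrec := ext0_rec N a b μ v hv
  have fwd : ∀ d : ℕ, ext0 N v (j + d) = 0 := by
    intro d
    induction d using Nat.strong_induction_on with
    | _ d ih =>
      match d with
      | 0 => exact h0
      | 1 => exact h1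
      | (e+2) =>
        by_cases hr : j + e + 1 < N
        · have heq := hrec (j + e + 1) hr
          have w1 : ext0 N v (j + e + 1 - 1) = 0 := by
            have : j + e + 1 - 1 = j + e := by omega
            rw [this]
            exact ih e (by omega)
          have w2 : ext0 N v (j + e + 1) = 0 := by
            have : j + e + 1 = j + (e + 1) := by omega
            rw [this]; exact ih (e+1) (by omega)
          rw [w1, w2] at heq
          simp at heq
          have : j + (e + 2) = j + e + 1 + 1 := by omega
          rw [this]
          rcases heq with h | h
          · exact absurd h (hb _)
          · exact h
        · have : ¬ (j + (e + 2) < N) := by omega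
          simp [ext0, this]
  have bwd : ∀ d : ℕ, d ≤ j → ext0 N v (j - d) = 0 := by
    intro d
    induction d using Nat.strong_induction_on with
    | _ d ih =>
      intro hd
      match d with
      | 0 => exact h0
      | (e+1) =>
        have hi1 : j - (e + 1) + 1 < N := by omega
        have heq := hrec (j - (e + 1) + 1) hi1
        have w1 : ext0 N v (j - (e + 1) + 1) = 0 := by
          have : j - (e + 1) + 1 = j - e := by omega
          rw [this]; exact ih e (by omega) (by omega)
        have w2 : ext0 N v (j - (e + 1) + 1 + 1) = 0 := by
          match e with
          | 0 =>
            have : j - (0 + 1) + 1 + 1 = j + 1 := by omega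
            rw [this]; exact h1
          | (f+1) =>
            have : j - (f + 1 + 1) + 1 + 1 = j - f := by omega
            rw [this]; exact ih f (by omega) (by omega)
        have hp : 0 < j - (e + 1) + 1 := by omega
        rw [if_pos hp] at heq
        have : j - (e + 1) + 1 - 1 = j - (e + 1) := by omega
        rw [this, w1, w2] at heq
        simp at heq
        rcases heq with h | h
        · exact absurd h (hb _)
        · exact h
  funext i
  have : ext0 N v (i : ℕ) = 0 := by
    rcases le_or_gt (i : ℕ) j with h | h
    · have := bwd (j - i) (by omega)
      have e : j - (j - (i:ℕ)) = (i:ℕ) := by omega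
      rwa [e] at this
    · have := fwd ((i : ℕ) - j)
      have e : j + ((i:ℕ) - j) = (i:ℕ) := by omega
      rwa [e] at this
  simpa [ext0, i.isLt] using this

lemma jacobi_symm (m : ℕ) (a b : ℕ → ℝ) : (jacobi m a b)ᵀ = jacobi m a b := by
  ext i j
  simp only [Matrix.transpose_apply, jacobi, Matrix.of_apply]
  split_ifs <;> first | rfl | omega | simp_all

/-- Dichotomy at an eigenvalue `β = λ_k` of a Jacobi matrix, for an interior index
`1 ≤ n ≤ N-2`: either `ψ_k(n) ≠ 0` and `β` is a pole of
`G(·,n,n) = Σ_l ψ_l(n)²/(λ_l - ·)`, or `ψ_k(n) = 0`, in which case `β` is a common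
eigenvalue of `J_{[0,n-1]}` and `J_{[n+1,N-1]}` and `G(·,n,n) → 0` at `β`. -/
theorem stmt_19 (N n : ℕ) (hn1 : 1 ≤ n) (hn2 : n + 2 ≤ N)
    (a b : ℕ → ℝ) (hb : ∀ i, b i ≠ 0)
    (lam : Fin N → ℝ) (hlam : StrictMono lam)
    (ψ : Fin N → Fin N → ℝ)
    (horth : ∀ k l, ψ k ⬝ᵥ ψ l = if k = l then 1 else 0)
    (heig : ∀ k, (jacobi N a b).mulVec (ψ k) = lam k • ψ k)
    (k : Fin N) :
    (ψ k ⟨n, by omega⟩ ≠ 0 →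
      Tendsto (fun x : ℝ => |∑ l, (ψ l ⟨n, by omega⟩) ^ 2 / (lam l - x)|)
        (nhdsWithin (lam k) {lam k}ᶜ) atTop) ∧
    (ψ k ⟨n, by omega⟩ = 0 →
      isEig (jacobi n a b) (lam k) ∧
      isEig (jacobi (N - n - 1) (fun i => a (n + 1 + i)) (fun i => b (n + 1 + i))) (lam k) ∧
      Tendsto (fun x : ℝ => ∑ l, (ψ l ⟨n, by omega⟩) ^ 2 / (lam l - x))
        (nhdsWithin (lam k) {lam k}ᶜ) (nhds 0)) := by
  classical
  set nn : Fin N := ⟨n, by omega⟩ with hnn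
  constructor
  · -- pole case
    intro hne
    have hc : 0 < (ψ k nn) ^ 2 := by positivity
    have hsplit : ∀ x : ℝ, (∑ l, (ψ l nn) ^ 2 / (lam l - x)) =
        (ψ k nn) ^ 2 / (lam k - x)
          + ∑ l ∈ Finset.univ.erase k, (ψ l nn) ^ 2 / (lam l - x) := by
      intro x
      exact (Finset.add_sum_erase _ _ (Finset.mem_univ k)).symm
    have hR : Tendsto (fun x : ℝ => ∑ l ∈ Finset.univ.erase k, (ψ l nn) ^ 2 / (lam l - x))
        (nhdsWithin (lam k) {lam k}ᶜ)
        (nhds (∑ l ∈ Finset.univ.erase k, (ψ l nn) ^ 2 / (lam l - lam k))) := by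
      apply Tendsto.mono_left _ nhdsWithin_le_nhds
      apply tendsto_finset_sum
      intro l hl
      have hlk : lam l - lam k ≠ 0 := by
        rw [sub_ne_zero]
        exact fun h => (Finset.ne_of_mem_erase hl) (hlam.injective h)
      exact Tendsto.div tendsto_const_nhds (tendsto_const_nhds.sub tendsto_id) hlk
    have habs : Tendsto (fun x : ℝ => |lam k - x|)
        (nhdsWithin (lam k) {lam k}ᶜ) (nhdsWithin 0 (Set.Ioi 0)) := by
      rw [tendsto_nhdsWithin_iff]
      constructor
      · have hcont : Continuous (fun x : ℝ => lam k - x) := by continuity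
        have h1 : Tendsto (fun x : ℝ => lam k - x) (nhds (lam k)) (nhds 0) := by
          simpa using hcont.tendsto (lam k)
        have := h1.abs
        simp only [abs_zero] at this
        exact this.mono_left nhdsWithin_le_nhds
      · filter_upwards [self_mem_nhdsWithin] with x hx
        simp only [Set.mem_Ioi]
        rw [abs_pos, sub_ne_zero]
        exact fun h => hx (by simp [← h])
    have hinv : Tendsto (fun x : ℝ => (ψ k nn) ^ 2 * |lam k - x|⁻¹)
        (nhdsWithin (lam k) {lam k}ᶜ) atTop :=
      Tendsto.const_mul_atTop hc (tendsto_inv_nhdsGT_zero.comp habs)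
    have hsum : Tendsto (fun x : ℝ => (ψ k nn) ^ 2 * |lam k - x|⁻¹
        + -(|∑ l ∈ Finset.univ.erase k, (ψ l nn) ^ 2 / (lam l - x)|))
        (nhdsWithin (lam k) {lam k}ᶜ) atTop :=
      hinv.atTop_add hR.abs.neg
    apply tendsto_atTop_mono _ hsum
    intro x
    have e1 : |(ψ k nn) ^ 2 / (lam k - x)| = (ψ k nn) ^ 2 * |lam k - x|⁻¹ := by
      rw [abs_div, abs_of_nonneg (by positivity : (0:ℝ) ≤ (ψ k nn) ^ 2), div_eq_mul_inv]
    rw [hsplit x, ← e1]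
    have := abs_sub_abs_le_abs_sub ((ψ k nn) ^ 2 / (lam k - x))
      (-(∑ l ∈ Finset.univ.erase k, (ψ l nn) ^ 2 / (lam l - x)))
    simp only [abs_neg, sub_neg_eq_add] at this
    linarith
  · -- common eigenvalue case
    intro hψn
    have recW := ext0_rec N a b (lam k) (ψ k) (heig k)
    have hψ1 : ext0 N (ψ k) n = 0 := by
      rw [ext0_apply N (ψ k) n (by omega)]
      exact hψn
    have hψkk : ψ k ⬝ᵥ ψ k = 1 := by simpa using horth k k
    have hψnz : ψ k ≠ 0 := by
      intro h
      rw [h] at hψkk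
      simp [dotProduct] at hψkk
    -- ψ k (n-1) ≠ 0
    have hprev : ext0 N (ψ k) (n - 1) ≠ 0 := by
      intro h
      apply hψnz
      apply vanish N a b hb (lam k) (ψ k) (heig k) (n - 1) (by omega) h
      rw [show n - 1 + 1 = n from by omega]
      exact hψ1
    refine ⟨?_, ?_, ?_⟩
    · -- left truncation
      refine ⟨fun i : Fin n => ext0 N (ψ k) i, ?_, ?_⟩
      · intro h
        apply hprev
        have := congrFun h ⟨n - 1, by omega⟩
        simpa using this
      · funext i
        rw [jacobi_mulVec]
        simp only [Pi.smul_apply, smul_eq_mul]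
        show (if h : 0 < (i:ℕ) then b ((i:ℕ)-1) * ext0 N (ψ k) ((i:ℕ)-1) else 0)
            + a (i:ℕ) * ext0 N (ψ k) (i:ℕ)
            + (if h : (i:ℕ)+1 < n then b (i:ℕ) * ext0 N (ψ k) ((i:ℕ)+1) else 0)
          = lam k * ext0 N (ψ k) (i:ℕ)
        rw [dite_eq_ite, dite_eq_ite]
        have e3 : (if (i:ℕ) + 1 < n then b (i:ℕ) * ext0 N (ψ k) ((i:ℕ)+1) else 0)
            = b (i:ℕ) * ext0 N (ψ k) ((i:ℕ)+1) := by
          split_ifs with h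
          · rfl
          · rw [show (i : ℕ) + 1 = n from by omega, hψ1, mul_zero]
        rw [e3]
        exact recW (i : ℕ) (by omega)
    · -- right truncation
      refine ⟨fun i : Fin (N - n - 1) => ext0 N (ψ k) (n + 1 + i), ?_, ?_⟩
      · intro h
        apply hψnz
        apply vanish N a b hb (lam k) (ψ k) (heig k) n (by omega) hψ1
        have := congrFun h ⟨0, by omega⟩
        simpa using this
      · funext i
        rw [jacobi_mulVec]
        simp only [Pi.smul_apply, smul_eq_mul]
        show (if h : 0 < (i:ℕ) then
              b (n+1+((i:ℕ)-1)) * ext0 N (ψ k) (n+1+((i:ℕ)-1)) else 0)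
            + a (n+1+(i:ℕ)) * ext0 N (ψ k) (n+1+(i:ℕ))
            + (if h : (i:ℕ)+1 < N-n-1 then
              b (n+1+(i:ℕ)) * ext0 N (ψ k) (n+1+(i:ℕ)+1) else 0)
          = lam k * ext0 N (ψ k) (n+1+(i:ℕ))
        rw [dite_eq_ite, dite_eq_ite]
        have key := recW (n + 1 + (i : ℕ)) (by omega)
        rw [if_pos (by omega : 0 < n + 1 + (i : ℕ))] at key
        have e1 : (if 0 < (i:ℕ) then
              b (n+1+((i:ℕ)-1)) * ext0 N (ψ k) (n+1+((i:ℕ)-1)) else 0)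
            = b (n+1+(i:ℕ)-1) * ext0 N (ψ k) (n+1+(i:ℕ)-1) := by
          split_ifs with h
          · rw [show n+1+((i:ℕ)-1) = n+1+(i:ℕ)-1 from by omega]
          · rw [show n+1+(i:ℕ)-1 = n from by omega, hψ1, mul_zero]
        have e3 : (if (i:ℕ)+1 < N-n-1 then
              b (n+1+(i:ℕ)) * ext0 N (ψ k) (n+1+(i:ℕ)+1) else 0)
            = b (n+1+(i:ℕ)) * ext0 N (ψ k) (n+1+(i:ℕ)+1) := by
          split_ifs with h
          · rfl
          · rw [show ext0 N (ψ k) (n+1+(i:ℕ)+1) = 0 from by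
              simp [ext0, show ¬ (n+1+(i:ℕ)+1 < N) from by omega], mul_zero]
        rw [e1, e3]
        exact key
    · -- G → 0
      -- the comb vector φ
      set Φ : ℕ → ℝ := fun s => if s < n then ext0 N (ψ k) s else 0 with hΦ
      set φ : Fin N → ℝ := fun i => Φ (i : ℕ) with hφ
      set c : ℝ := b (n - 1) * ext0 N (ψ k) (n - 1) with hc
      have hcne : c ≠ 0 := mul_ne_zero (hb _) hprev
      have hA : (jacobi N a b).mulVec φ
          = fun i : Fin N => lam k * φ i + (if (i : ℕ) = n then c else 0) := by
        funext i
        rw [jacobi_mulVec]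
        show (if h : 0 < (i:ℕ) then b ((i:ℕ)-1) * Φ ((i:ℕ)-1) else 0)
            + a (i:ℕ) * Φ (i:ℕ)
            + (if h : (i:ℕ)+1 < N then b (i:ℕ) * Φ ((i:ℕ)+1) else 0)
          = lam k * Φ (i:ℕ) + (if (i:ℕ) = n then c else 0)
        rw [dite_eq_ite, dite_eq_ite]
        rcases lt_trichotomy (i : ℕ) n with hs | hs | hs
        · -- i < n
          have e0 : Φ (i:ℕ) = ext0 N (ψ k) (i:ℕ) := by
            simp only [hΦ]; rw [if_pos hs]
          have e1 : (if 0 < (i:ℕ) then b ((i:ℕ)-1) * Φ ((i:ℕ)-1) else 0)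
              = (if 0 < (i:ℕ) then b ((i:ℕ)-1) * ext0 N (ψ k) ((i:ℕ)-1) else 0) := by
            split_ifs with h
            · simp only [hΦ]; rw [if_pos (show (i:ℕ)-1 < n by omega)]
            · rfl
          have e3 : (if (i:ℕ)+1 < N then b (i:ℕ) * Φ ((i:ℕ)+1) else 0)
              = b (i:ℕ) * ext0 N (ψ k) ((i:ℕ)+1) := by
            rw [if_pos (show (i:ℕ)+1 < N by omega)]
            simp only [hΦ]
            by_cases h : (i:ℕ)+1 < n
            · rw [if_pos h]
            · rw [if_neg h, show (i:ℕ)+1 = n from by omega, hψ1]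
          rw [e0, e1, e3, if_neg (show ¬ (i:ℕ) = n by omega), add_zero]
          exact recW (i:ℕ) (by omega)
        · -- i = n
          have em : Φ ((i:ℕ)-1) = ext0 N (ψ k) (n-1) := by
            simp only [hΦ]
            rw [if_pos (show (i:ℕ)-1 < n by omega), show (i:ℕ)-1 = n-1 from by omega]
          have e0 : Φ (i:ℕ) = 0 := by simp only [hΦ]; rw [if_neg (by omega)]
          have ep : Φ ((i:ℕ)+1) = 0 := by simp only [hΦ]; rw [if_neg (by omega)]
          rw [if_pos (show 0 < (i:ℕ) by omega), if_pos (show (i:ℕ)+1 < N by omega),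
            e0, em, ep, if_pos hs, show (i:ℕ)-1 = n-1 from by omega, hc]
          ring
        · -- i > n
          have em : Φ ((i:ℕ)-1) = 0 := by simp only [hΦ]; rw [if_neg (by omega)]
          have e0 : Φ (i:ℕ) = 0 := by simp only [hΦ]; rw [if_neg (by omega)]
          have ep : Φ ((i:ℕ)+1) = 0 := by simp only [hΦ]; rw [if_neg (by omega)]
          rw [if_pos (show 0 < (i:ℕ) by omega), e0, em, ep,
            if_neg (show ¬ (i:ℕ) = n by omega)]
          split_ifs <;> ring
      have hsym := jacobi_symm N a b
      have hB : ∀ l, (lam l - lam k) * (ψ l ⬝ᵥ φ) = c * ψ l nn := by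
        intro l
        have h1 : ψ l ⬝ᵥ ((jacobi N a b).mulVec φ) = lam l * (ψ l ⬝ᵥ φ) := by
          rw [Matrix.dotProduct_mulVec, ← Matrix.mulVec_transpose, hsym, heig l]
          simp only [dotProduct, Pi.smul_apply, smul_eq_mul, Finset.mul_sum]
          apply Finset.sum_congr rfl
          intro i _
          ring
        have h2 : ψ l ⬝ᵥ ((jacobi N a b).mulVec φ)
            = lam k * (ψ l ⬝ᵥ φ) + c * ψ l nn := by
          rw [hA]
          simp only [dotProduct]
          have e : ∀ i : Fin N, ψ l i * (lam k * φ i + (if (i : ℕ) = n then c else 0))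
              = lam k * (ψ l i * φ i) + (if i = nn then ψ l i * c else 0) := by
            intro i
            by_cases hin : i = nn
            · rw [if_pos hin, if_pos (show (i:ℕ) = n by rw [hin, hnn])]
              ring
            · rw [if_neg hin, if_neg (show ¬ (i:ℕ) = n from fun hh => hin (by
                rw [hnn]; exact Fin.ext hh))]
              ring
          rw [Finset.sum_congr rfl (fun i _ => e i), Finset.sum_add_distrib,
            Finset.sum_ite_eq']
          simp [Finset.mul_sum]
          ring
        rw [sub_mul, ← h1, h2]
        ring
      have hUU : ∀ i j : Fin N, (∑ l, ψ l i * ψ l j) = if i = j then 1 else 0 := by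
        have h1 : (Matrix.of ψ) * (Matrix.of ψ)ᵀ = 1 := by
          ext p q
          simp only [Matrix.mul_apply, Matrix.of_apply, Matrix.transpose_apply,
            Matrix.one_apply]
          simpa [dotProduct] using horth p q
        have h2 := mul_eq_one_comm.mp h1
        intro i j
        have h3 := congrFun (congrFun h2 i) j
        simp only [Matrix.mul_apply, Matrix.of_apply, Matrix.transpose_apply,
          Matrix.one_apply] at h3
        exact h3
      have hC : (∑ l, ψ l nn * (ψ l ⬝ᵥ φ)) = 0 := by
        simp only [dotProduct]
        have e : ∀ l : Fin N, ψ l nn * (∑ i, ψ l i * φ i)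
            = ∑ i, (ψ l nn * ψ l i) * φ i := by
          intro l
          rw [Finset.mul_sum]
          apply Finset.sum_congr rfl
          intro i _
          ring
        rw [Finset.sum_congr rfl (fun l _ => e l), Finset.sum_comm]
        have e2 : ∀ i : Fin N, (∑ l, (ψ l nn * ψ l i) * φ i)
            = (if nn = i then 1 else 0) * φ i := by
          intro i
          rw [← Finset.sum_mul, hUU nn i]
        rw [Finset.sum_congr rfl (fun i _ => e2 i)]
        have e3 : ∀ i : Fin N, (if nn = i then (1:ℝ) else 0) * φ i
            = if nn = i then φ i else 0 := by
          intro i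
          split_ifs <;> ring
        rw [Finset.sum_congr rfl (fun i _ => e3 i), Finset.sum_ite_eq]
        simp only [Finset.mem_univ, if_true]
        simp only [hφ, hΦ]
        rw [if_neg (show ¬ (n < n) from by omega)]
      have hS : (∑ l, (ψ l nn) ^ 2 / (lam l - lam k)) = 0 := by
        have hcS : c * (∑ l, (ψ l nn) ^ 2 / (lam l - lam k)) = 0 := by
          rw [Finset.mul_sum, ← hC]
          apply Finset.sum_congr rfl
          intro l _
          by_cases hl : l = k
          · subst hl
            rw [hψn]
            simp
          · have hlk : lam l - lam k ≠ 0 := by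
              rw [sub_ne_zero]
              exact fun h => hl (hlam.injective h)
            have hP : ψ l ⬝ᵥ φ = c * ψ l nn / (lam l - lam k) := by
              rw [eq_div_iff hlk]
              linear_combination hB l
            rw [hP]
            field_simp
        rcases mul_eq_zero.mp hcS with h | h
        · exact absurd h hcne
        · exact h
      have hT : Tendsto (fun x : ℝ => ∑ l, (ψ l nn) ^ 2 / (lam l - x))
          (nhdsWithin (lam k) {lam k}ᶜ)
          (nhds (∑ l, (ψ l nn) ^ 2 / (lam l - lam k))) := by
        apply Tendsto.mono_left _ nhdsWithin_le_nhds
        apply tendsto_finset_sum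
        intro l _
        by_cases hl : l = k
        · subst hl
          rw [hψn]
          simp only [ne_eq, OfNat.ofNat_ne_zero, not_false_eq_true, zero_pow, zero_div]
          exact tendsto_const_nhds
        · have hlk : lam l - lam k ≠ 0 := by
            rw [sub_ne_zero]
            exact fun h => hl (hlam.injective h)
          exact Tendsto.div tendsto_const_nhds (tendsto_const_nhds.sub tendsto_id) hlk
      rwa [hS] at hT
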